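/- Let Z be a measurable space, V a positive natural number, and Y a finite nonempty type with a one-hot encoding e : Y → (Fin V → ℝ). For measurable h : Z → (Fin V → ℝ), define the L1 loss ℓ_h(z, y) = ∑_{i ∈ Fin V} |h(z)(i) − e(y)(i)|. Let H be a nonempty set of such measurable functions with ℓ_{h'}(z, y) ≤ C for all h' ∈ H, z, y. Let p : Y → ℝ be nonnegative with ∑_y p(y) = 1, and for each y let ν_A(y), ν_T(y) be probability measures on Z. Define the test risk R_te(h) = ∑_y p(y) · ∫ ℓ_h(z, y) dν_A(y)(z), the population training risk R_tr(h) = ∑_y p(y) · ∫ ℓ_h(z, y) dν_T(y)(z), and for a finite training sample (z_1, y_1), …, (z_N, y_N) ∈ Z × Y the empirical training risk R̂_tr(h) = (1/N) ∑_{i=1}^N ℓ_h(z_i, y_i). Define disc(y) = ⨆_{h' ∈ H} |∫ ℓ_{h'}(z, y) dν_A(y)(z) − ∫ ℓ_{h'}(z, y) dν_T(y)(z)|. Then for every h ∈ H and every ε ≥ 0 such that |R_tr(h) − R̂_tr(h)| ≤ ε, one has R_te(h) ≤ R̂_tr(h) + max_{y ∈ Y} disc(y) + ε. -/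
import Mathlib


open MeasureTheory

/-- Deterministic core of the generalization bound (Theorem 3.1): the test risk of a hypothesis
`h ∈ H` is bounded by its empirical training risk, plus the maximal per-class L1 discrepancy
between the audio and text conditional embedding distributions, plus the deviation `ε` between
the population and empirical training risks. -/
theorem generalization_bound_core
    {Z : Type*} [MeasurableSpace Z] {V : ℕ} (hV : 0 < V)
    {Y : Type*} [Fintype Y] [Nonempty Y]
    (e : Y → Fin V → ℝ) (hone : ∀ y, ∃ i : Fin V, e y = Pi.single i 1)
    (H : Set (Z → Fin V → ℝ)) (hHne : H.Nonempty) (hHmeas : ∀ h ∈ H, Measurable h)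
    (C : ℝ) (hC : 0 ≤ C)
    (hbd : ∀ h' ∈ H, ∀ (z : Z) (y : Y), ∑ i, |h' z i - e y i| ≤ C)
    (p : Y → ℝ) (hp : ∀ y, 0 ≤ p y) (hpsum : ∑ y, p y = 1)
    (νA νT : Y → Measure Z)
    (hA : ∀ y, IsProbabilityMeasure (νA y)) (hT : ∀ y, IsProbabilityMeasure (νT y))
    (N : ℕ) (hN : 0 < N) (sample : Fin N → Z × Y)
    (h : Z → Fin V → ℝ) (hh : h ∈ H) (ε : ℝ) (hε : 0 ≤ ε)
    (hdev :
      |∑ y, p y * ∫ z, (∑ i, |h z i - e y i|) ∂(νT y) -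
        (1 / (N : ℝ)) * (∑ k, ∑ i, |h (sample k).1 i - e (sample k).2 i|)| ≤ ε) :
    ∑ y, p y * ∫ z, (∑ i, |h z i - e y i|) ∂(νA y) ≤
      (1 / (N : ℝ)) * ∑ k, ∑ i, |h (sample k).1 i - e (sample k).2 i| +
      Finset.univ.sup' Finset.univ_nonempty (fun y =>
        ⨆ h' : H, |∫ z, (∑ i, |(h' : Z → Fin V → ℝ) z i - e y i|) ∂(νA y) -
          ∫ z, (∑ i, |(h' : Z → Fin V → ℝ) z i - e y i|) ∂(νT y)|) +
      ε := by
  -- notation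
  set disc : Y → ℝ := fun y =>
    ⨆ h' : H, |∫ z, (∑ i, |(h' : Z → Fin V → ℝ) z i - e y i|) ∂(νA y) -
      ∫ z, (∑ i, |(h' : Z → Fin V → ℝ) z i - e y i|) ∂(νT y)| with hdisc
  set M : ℝ := Finset.univ.sup' Finset.univ_nonempty disc with hM
  -- boundedness of integrals
  have hintle : ∀ (h' : Z → Fin V → ℝ), h' ∈ H → ∀ (y : Y) (μ : Measure Z),
      IsProbabilityMeasure μ → |∫ z, (∑ i, |h' z i - e y i|) ∂μ| ≤ C := by
    intro h' hh' y μ hμ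
    have := norm_integral_le_of_norm_le_const (μ := μ)
      (f := fun z => ∑ i, |h' z i - e y i|) (C := C)
      (Filter.Eventually.of_forall (fun z => by
        have h0 : (0:ℝ) ≤ ∑ i, |h' z i - e y i| :=
          Finset.sum_nonneg (fun i _ => abs_nonneg _)
        simpa [Real.norm_eq_abs, abs_of_nonneg h0] using hbd h' hh' z y))
    simpa [Real.norm_eq_abs] using this
  have hbdd : ∀ y : Y, BddAbove (Set.range fun h' : H =>
      |∫ z, (∑ i, |(h' : Z → Fin V → ℝ) z i - e y i|) ∂(νA y) -
        ∫ z, (∑ i, |(h' : Z → Fin V → ℝ) z i - e y i|) ∂(νT y)|) := by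
    intro y
    refine ⟨C + C, ?_⟩
    rintro x ⟨⟨h', hh'⟩, rfl⟩
    exact (abs_sub _ _).trans
      (add_le_add (hintle h' hh' y _ (hA y)) (hintle h' hh' y _ (hT y)))
  -- per-class bound
  have hkey : ∀ y : Y,
      ∫ z, (∑ i, |h z i - e y i|) ∂(νA y) ≤
        ∫ z, (∑ i, |h z i - e y i|) ∂(νT y) + disc y := by
    intro y
    have hle : |∫ z, (∑ i, |h z i - e y i|) ∂(νA y) -
        ∫ z, (∑ i, |h z i - e y i|) ∂(νT y)| ≤ disc y := by
      have := le_ciSup (hbdd y) (⟨h, hh⟩ : H)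
      simpa [hdisc] using this
    linarith [le_abs_self (∫ z, (∑ i, |h z i - e y i|) ∂(νA y) -
        ∫ z, (∑ i, |h z i - e y i|) ∂(νT y)), hle]
  -- disc ≤ M
  have hdM : ∀ y : Y, disc y ≤ M := fun y => Finset.le_sup' disc (Finset.mem_univ y)
  have hsum : ∑ y, p y * ∫ z, (∑ i, |h z i - e y i|) ∂(νA y) ≤
      ∑ y, p y * ∫ z, (∑ i, |h z i - e y i|) ∂(νT y) + M := by
    calc ∑ y, p y * ∫ z, (∑ i, |h z i - e y i|) ∂(νA y)
        ≤ ∑ y, p y * (∫ z, (∑ i, |h z i - e y i|) ∂(νT y) + disc y) :=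
          Finset.sum_le_sum (fun y _ => mul_le_mul_of_nonneg_left (hkey y) (hp y))
      _ = ∑ y, p y * ∫ z, (∑ i, |h z i - e y i|) ∂(νT y) + ∑ y, p y * disc y := by
          simp [mul_add, Finset.sum_add_distrib]
      _ ≤ ∑ y, p y * ∫ z, (∑ i, |h z i - e y i|) ∂(νT y) + M := by
          have : ∑ y, p y * disc y ≤ ∑ y, p y * M :=
            Finset.sum_le_sum (fun y _ => mul_le_mul_of_nonneg_left (hdM y) (hp y))
          have h2 : ∑ y, p y * M = M := by rw [← Finset.sum_mul, hpsum, one_mul]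
          linarith
  have htr : ∑ y, p y * ∫ z, (∑ i, |h z i - e y i|) ∂(νT y) ≤
      (1 / (N : ℝ)) * (∑ k, ∑ i, |h (sample k).1 i - e (sample k).2 i|) + ε := by
    have := (abs_le.mp hdev).2
    linarith
  linarith
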